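/- Let a, α, ε ∈ ℝ, b > 0, and let x, y, q : I → ℝ be differentiable functions on a real interval I with y(t) > 0 and 1 + a·y(t) > 0 for all t, satisfying x'(t) = y(t)·( ε(1 + α y(t)) + x(t)(x(t) − q(t)) ), y'(t) = y(t)²·(x(t) − q(t)), q'(t) = q(t)·(x(t) − q(t))·( b + a·y(t)²/(1 + a·y(t)) ). Then the function t ↦ q(t)·exp(b/y(t))/(1 + a·y(t)) is constant on I. In particular, if q(t₀) = (1 + a·y(t₀))·exp(−b/y(t₀)) for some t₀, then q(t) = (1 + a·y(t))·exp(−b/y(t)) for all t ∈ I. -/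

import Mathlib

open Real

/-- Invariance of the set `Q : q = (1+ay)·exp(−b/y)` for the extended aircraft
ground-dynamics system
`x' = y(ε(1+αy) + x(x−q)), y' = y²(x−q), q' = q(x−q)(b + ay²/(1+ay))`. -/
theorem stmt7 (a α ε b : ℝ) (hb : 0 < b) (I : Set ℝ) (hI : I.OrdConnected)
    (x y q : ℝ → ℝ)
    (hy : ∀ t ∈ I, 0 < y t)
    (hay : ∀ t ∈ I, 0 < 1 + a * y t)
    (hx' : ∀ t ∈ I, HasDerivWithinAt x
      (y t * (ε * (1 + α * y t) + x t * (x t - q t))) I t)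
    (hy' : ∀ t ∈ I, HasDerivWithinAt y ((y t) ^ 2 * (x t - q t)) I t)
    (hq' : ∀ t ∈ I, HasDerivWithinAt q
      (q t * (x t - q t) * (b + a * (y t) ^ 2 / (1 + a * y t))) I t) :
    (∀ s ∈ I, ∀ t ∈ I,
      q s * Real.exp (b / y s) / (1 + a * y s) = q t * Real.exp (b / y t) / (1 + a * y t)) ∧
    (∀ t₀ ∈ I, q t₀ = (1 + a * y t₀) * Real.exp (-(b / y t₀)) →
      ∀ t ∈ I, q t = (1 + a * y t) * Real.exp (-(b / y t))) := by
  set F : ℝ → ℝ := fun t => q t * Real.exp (b / y t) / (1 + a * y t) with hF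
  have key : ∀ t ∈ I, HasDerivWithinAt F 0 I t := by
    intro t ht
    have hyt := hy t ht
    have hayt := hay t ht
    have h1 : HasDerivWithinAt (fun t => b / y t)
        ((0 * y t - b * ((y t) ^ 2 * (x t - q t))) / (y t) ^ 2) I t :=
      (hasDerivWithinAt_const t I b).div (hy' t ht) hyt.ne'
    have h2 : HasDerivWithinAt (fun t => Real.exp (b / y t))
        (Real.exp (b / y t) * ((0 * y t - b * ((y t) ^ 2 * (x t - q t))) / (y t) ^ 2)) I t :=
      h1.exp
    have h3 : HasDerivWithinAt (fun t => q t * Real.exp (b / y t))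
        (q t * (x t - q t) * (b + a * (y t) ^ 2 / (1 + a * y t)) * Real.exp (b / y t)
          + q t * (Real.exp (b / y t) * ((0 * y t - b * ((y t) ^ 2 * (x t - q t))) / (y t) ^ 2)))
        I t := (hq' t ht).mul h2
    have h4 : HasDerivWithinAt (fun t => 1 + a * y t)
        (0 + a * ((y t) ^ 2 * (x t - q t))) I t :=
      (hasDerivWithinAt_const t I 1).add ((hy' t ht).const_mul a)
    have h5 := h3.div h4 hayt.ne'
    refine (h5.congr_deriv ?_ : HasDerivWithinAt F 0 I t)
    field_simp
    ring
  have hconv : Convex ℝ I := hI.convex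
  have hconst : ∀ s ∈ I, ∀ t ∈ I, F s = F t := by
    intro s hs t ht
    have := hconv.norm_image_sub_le_of_norm_hasDerivWithin_le (f' := fun _ => (0 : ℝ)) (C := 0)
      key (fun z hz => by simp) ht hs
    simp only [zero_mul] at this
    have := norm_le_zero_iff.mp (le_of_le_of_eq this rfl)
    linarith [sub_eq_zero.mp this]
  refine ⟨hconst, ?_⟩
  intro t₀ ht₀ hq0 t ht
  have h := hconst t ht t₀ ht₀
  have hyt := hy t ht
  have hay0 := hay t₀ ht₀
  have hayt := hay t ht
  have : F t₀ = 1 := by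
    simp only [hF, hq0]
    rw [Real.exp_neg]
    field_simp
  rw [this] at h
  have hexp : Real.exp (b / y t) ≠ 0 := (Real.exp_pos _).ne'
  have : q t * Real.exp (b / y t) = 1 + a * y t := by
    simp only [hF] at h
    rw [div_eq_iff hayt.ne'] at h
    linarith
  rw [Real.exp_neg]
  field_simp
  linarith
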